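/- Let $n \in \mathbb{Z}^N$ be nonnegative and nonincreasing ($n_1 \ge n_2 \ge \dots \ge n_N \ge 0$), and suppose for indices $j < i$ with $n_j > n_i$ and $1 \le r \le n_j - n_i - 1$ we form $n' = (n_1,\dots,n_j - r,\dots,n_i + r,\dots,n_N)$. Then $[n'] \prec [n]$ in the order where $\prec$ compares the nonincreasing rearrangements of absolute values lexicographically. -/

import Mathlib

/-- `[n]`: the nonincreasing rearrangement of the absolute values of the entries. -/
def bracket {N : ℕ} (n : Fin N → ℤ) : List ℤ :=
  (Multiset.map (fun i => |n i|) Finset.univ.val).sort (· ≥ ·)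

/-- The partial order `≺` of the paper: `n ≺ n'` iff `[n] <_lex [n']`. -/
def prec {N : ℕ} (n n' : Fin N → ℤ) : Prop :=
  List.Lex (· < ·) (bracket n) (bracket n')

private lemma key_lex : ∀ (L L' : List ℤ) (v : ℤ),
    L'.Pairwise (· ≥ ·) → L.Pairwise (· ≥ ·) →
    (∀ w, v < w → L'.countP (fun x => decide (w ≤ x)) = L.countP (fun x => decide (w ≤ x))) →
    L'.countP (fun x => decide (v ≤ x)) < L.countP (fun x => decide (v ≤ x)) →
    List.Lex (· < ·) L' L := by
  intro L
  induction L with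
  | nil => intro L' v _ _ _ hv; simp at hv
  | cons a L₀ ih =>
    intro L' v hs' hs hw hv
    match L' with
    | [] => exact List.Lex.nil
    | a' :: L₀' =>
      rcases lt_trichotomy a' a with h | h | h
      · exact List.Lex.rel h
      · subst h
        rcases le_or_gt v a' with hva | hva
        · -- recurse
          apply List.Lex.cons
          refine ih L₀' v hs'.of_cons hs.of_cons ?_ ?_
          · intro w hvw
            have := hw w hvw
            simp only [List.countP_cons] at this
            omega
          · simp only [List.countP_cons, decide_eq_true_eq, if_pos hva] at hv
            omega
        · -- contradiction: countP v L = 0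
          exfalso
          have hL : (a' :: L₀).countP (fun x => decide (v ≤ x)) = 0 := by
            rw [List.countP_eq_zero]
            intro b hb
            simp only [decide_eq_true_eq, not_le]
            rcases List.mem_cons.mp hb with rfl | hb
            · exact hva
            · exact lt_of_le_of_lt ((List.pairwise_cons.mp hs).1 b hb) hva
          omega
      · -- a' > a : contradiction
        exfalso
        have hzero : ∀ w, a < w → (a :: L₀).countP (fun x => decide (w ≤ x)) = 0 := by
          intro w hwa
          rw [List.countP_eq_zero]
          intro b hb
          simp only [decide_eq_true_eq, not_le]
          rcases List.mem_cons.mp hb with rfl | hb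
          · exact hwa
          · exact lt_of_le_of_lt ((List.pairwise_cons.mp hs).1 b hb) hwa
        rcases le_or_gt a' v with hav | hav
        · have h0 := hzero v (lt_of_lt_of_le h hav)
          omega
        · have h1 := hw a' hav
          have h2 := hzero a' h
          rw [h2] at h1
          simp only [List.countP_cons, decide_eq_true_eq, if_pos (le_refl a')] at h1
          omega

/-- Key triangularity step: if `n` is nonnegative and nonincreasing, `j < i`,
`n j > n i`, and `1 ≤ r ≤ n j - n i - 1`, then the multiindex obtained from `n`
by replacing `n j ↦ n j - r` and `n i ↦ n i + r` is strictly lower than `n`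
in the order `≺`. -/
theorem transfer_lowers_order (N : ℕ) (n : Fin N → ℤ)
    (hnonneg : ∀ i, 0 ≤ n i)
    (hmono : ∀ i j : Fin N, i ≤ j → n j ≤ n i)
    (i j : Fin N) (hji : j < i) (hgt : n i < n j)
    (r : ℤ) (hr1 : 1 ≤ r) (hr2 : r ≤ n j - n i - 1) :
    prec (Function.update (Function.update n j (n j - r)) i (n i + r)) n := by
  set n' : Fin N → ℤ := Function.update (Function.update n j (n j - r)) i (n i + r) with hn'
  have hij : i ≠ j := (ne_of_gt hji)
  have hn'i : n' i = n i + r := Function.update_self i _ _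
  have hn'j : n' j = n j - r := by
    rw [hn', Function.update_of_ne hij.symm, Function.update_self]
  have hn'k : ∀ k : Fin N, k ≠ i → k ≠ j → n' k = n k := by
    intro k hki hkj
    rw [hn', Function.update_of_ne hki, Function.update_of_ne hkj]
  -- decompose univ.val
  have hjmem : j ∈ Finset.univ.erase i := Finset.mem_erase.mpr ⟨hij.symm, Finset.mem_univ j⟩
  set A : Finset (Fin N) := (Finset.univ.erase i).erase j with hA
  have h1 : (Finset.univ : Finset (Fin N)).val = i ::ₘ j ::ₘ A.val := by
    rw [hA, Finset.erase_val, Finset.erase_val]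
    rw [Multiset.cons_erase (by rw [← Finset.erase_val]; exact hjmem)]
    rw [Multiset.cons_erase (Finset.mem_univ i)]
  have hmapA : A.val.map (fun k => |n' k|) = A.val.map (fun k => |n k|) := by
    apply Multiset.map_congr rfl
    intro k hk
    have hk' := Finset.mem_erase.mp (Finset.mem_val.mp hk)
    have hk'' := Finset.mem_erase.mp hk'.2
    rw [hn'k k hk''.1 hk'.1]
  -- numeric facts
  have hni : 0 ≤ n i := hnonneg i
  have e1 : |n' i| = n i + r := by rw [hn'i, abs_of_nonneg (by omega)]
  have e2 : |n' j| = n j - r := by rw [hn'j, abs_of_nonneg (by omega)]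
  have e3 : |n i| = n i := abs_of_nonneg hni
  have e4 : |n j| = n j := abs_of_nonneg (hnonneg j)
  have hcount : ∀ w : ℤ,
      (bracket n').countP (fun x => decide (w ≤ x)) =
        (A.val.map (fun k => |n k|)).countP (fun x => w ≤ x)
          + (if w ≤ n i + r then 1 else 0) + (if w ≤ n j - r then 1 else 0) ∧
      (bracket n).countP (fun x => decide (w ≤ x)) =
        (A.val.map (fun k => |n k|)).countP (fun x => w ≤ x)
          + (if w ≤ n i then 1 else 0) + (if w ≤ n j then 1 else 0) := by
    intro w
    constructor
    · rw [bracket, ← Multiset.coe_countP (fun x => w ≤ x), Multiset.sort_eq, h1,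
        Multiset.map_cons, Multiset.map_cons, hmapA, Multiset.countP_cons,
        Multiset.countP_cons, e1, e2]
      ring
    · rw [bracket, ← Multiset.coe_countP (fun x => w ≤ x), Multiset.sort_eq, h1,
        Multiset.map_cons, Multiset.map_cons, Multiset.countP_cons,
        Multiset.countP_cons, e3, e4]
      ring
  apply key_lex _ _ (n j) (Multiset.pairwise_sort _ _) (Multiset.pairwise_sort _ _)
  · intro w hw
    obtain ⟨c1, c2⟩ := hcount w
    show List.countP (fun x => decide (w ≤ x)) (bracket n') =
      List.countP (fun x => decide (w ≤ x)) (bracket n)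
    rw [c1, c2]
    have : ¬ w ≤ n i + r := by omega
    have : ¬ w ≤ n j - r := by omega
    have : ¬ w ≤ n i := by omega
    have : ¬ w ≤ n j := by omega
    simp only [if_neg ‹¬ w ≤ n i + r›, if_neg ‹¬ w ≤ n j - r›, if_neg ‹¬ w ≤ n i›,
      if_neg ‹¬ w ≤ n j›]
  · obtain ⟨c1, c2⟩ := hcount (n j)
    show List.countP (fun x => decide (n j ≤ x)) (bracket n') <
      List.countP (fun x => decide (n j ≤ x)) (bracket n)
    rw [c1, c2]
    have h5 : ¬ n j ≤ n i + r := by omega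
    have h6 : ¬ n j ≤ n j - r := by omega
    have h7 : ¬ n j ≤ n i := by omega
    simp only [if_neg h5, if_neg h6, if_neg h7, if_pos (le_refl (n j))]
    omega
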